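/- arXiv:2508.03552 — 7 statements merged into one kernel-verified Lean document; each statement's English description precedes it below -/
import Mathlib

section
/- Let I be a subset of {1,…,n} with |I| = k. Then there exists a nonzero polynomial f in the twisted polynomial space V_{(k,1,k-1,η)} such that f(α_i) = 0 for every i ∈ I if and only if η·∑_{i∈I} α_i = -1. -/
open Polynomial

/-- The set of `(k,1,ℓ,η)`-twisted polynomials:
`{ ∑_{i=0}^{k-1} a_i x^i + η a_ℓ x^k : a_i ∈ F }`. -/
def twistedSpace {F : Type*} [Field F] (k ℓ : ℕ) (hℓ : ℓ < k) (η : F) :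
    Set (Polynomial F) :=
  {f | ∃ a : Fin k → F,
    f = (∑ i : Fin k, Polynomial.C (a i) * Polynomial.X ^ (i : ℕ))
          + Polynomial.C (η * a ⟨ℓ, hℓ⟩) * Polynomial.X ^ k}

lemma mem_twistedSpace_iff {F : Type*} [Field F] {k : ℕ} (hk : 1 ≤ k) (η : F)
    (f : Polynomial F) :
    f ∈ twistedSpace k (k - 1) (Nat.sub_lt hk Nat.one_pos) η ↔
      f.natDegree ≤ k ∧ f.coeff k = η * f.coeff (k - 1) := by
  constructor
  · rintro ⟨a, rfl⟩
    constructor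
    · refine le_trans (natDegree_add_le _ _) (max_le ?_ ?_)
      · refine le_trans (natDegree_sum_le _ _) ?_
        simp only [Finset.fold_max_le]
        refine ⟨Nat.zero_le _, fun i _ => ?_⟩
        exact le_trans (natDegree_C_mul_le _ _) (by simp [Nat.le_of_lt i.2])
      · exact le_trans (natDegree_C_mul_le _ _) (by simp)
    · have h1 : (∑ i : Fin k, Polynomial.C (a i) * Polynomial.X ^ (i : ℕ)).coeff k = 0 := by
        rw [finset_sum_coeff]
        refine Finset.sum_eq_zero fun i _ => ?_
        rw [coeff_C_mul, coeff_X_pow, if_neg (Nat.ne_of_gt i.2), mul_zero]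
      have h2 : (∑ i : Fin k, Polynomial.C (a i) * Polynomial.X ^ (i : ℕ)).coeff (k - 1)
          = a ⟨k - 1, Nat.sub_lt hk Nat.one_pos⟩ := by
        rw [finset_sum_coeff]
        rw [Finset.sum_eq_single (⟨k - 1, Nat.sub_lt hk Nat.one_pos⟩ : Fin k)]
        · simp
        · intro i _ hi
          rw [coeff_C_mul, coeff_X_pow, if_neg, mul_zero]
          intro h; exact hi (Fin.ext h.symm)
        · simp
      have hk1 : k - 1 ≠ k := Nat.ne_of_lt (Nat.sub_lt hk Nat.one_pos)
      rw [coeff_add, coeff_add, h1, h2, zero_add, coeff_C_mul, coeff_C_mul,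
        coeff_X_pow, coeff_X_pow, if_pos rfl, if_neg hk1, mul_one, mul_zero, add_zero]
  · rintro ⟨hdeg, hc⟩
    refine ⟨fun i => f.coeff i, ?_⟩
    have h := f.as_sum_range' (k + 1) (Nat.lt_succ_of_le hdeg)
    rw [Finset.sum_range_succ] at h
    conv_lhs => rw [h]
    rw [← hc]
    simp only [Polynomial.C_mul_X_pow_eq_monomial]
    congr 1
    exact (Fin.sum_univ_eq_sum_range (fun i => (monomial i) (f.coeff i)) k).symm

set_option maxHeartbeats 1000000 in
/-- There exists a nonzero twisted polynomial in `V_{(k,1,k-1,η)}` vanishing on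
`{α_i : i ∈ I}` (with `|I| = k`) iff `η ∑_{i ∈ I} α_i = -1`. -/
theorem twisted_vanishing_iff {F : Type*} [Field F] {n k : ℕ}
    (hk : 1 ≤ k) (hkn : k < n)
    (α : Fin n → F) (hα : Function.Injective α) (η : F) (hη : η ≠ 0)
    (I : Finset (Fin n)) (hI : I.card = k) :
    (∃ f ∈ twistedSpace k (k - 1) (Nat.sub_lt hk Nat.one_pos) η,
        f ≠ 0 ∧ ∀ i ∈ I, f.eval (α i) = 0)
      ↔ η * ∑ i ∈ I, α i = -1 := by
  set P : Polynomial F := ∏ i ∈ I, (X - C (α i)) with hP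
  have hPmonic : P.Monic := monic_prod_of_monic _ _ fun i _ => monic_X_sub_C _
  have hPdeg : P.natDegree = k := by
    rw [hP, natDegree_prod_of_monic _ _ fun i _ => monic_X_sub_C _]
    simp [hI]
  have hInonempty : I.Nonempty := Finset.card_pos.mp (hI ▸ hk)
  have hPnext : P.nextCoeff = -∑ i ∈ I, α i := by
    rw [hP]; exact prod_X_sub_C_nextCoeff α
  have hPk1 : P.coeff (k - 1) = -∑ i ∈ I, α i := by
    have : P.nextCoeff = P.coeff (P.natDegree - 1) := by
      rw [nextCoeff, if_neg (by omega)]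
    rw [← hPnext, this, hPdeg]
  have hPk : P.coeff k = 1 := by
    have := hPmonic.leadingCoeff
    rwa [leadingCoeff, hPdeg] at this
  constructor
  · rintro ⟨f, hf, hfne, hfz⟩
    rw [mem_twistedSpace_iff hk] at hf
    obtain ⟨hdeg, hc⟩ := hf
    -- P divides f
    have hdvd : P ∣ f := by
      classical
      have hle : (I.val.map α) ≤ f.roots := by
        rw [Multiset.le_iff_count]
        intro a
        by_cases ha : a ∈ I.val.map α
        · obtain ⟨i, hi, rfl⟩ := Multiset.mem_map.mp ha
          have hnd : (I.val.map α).Nodup := I.nodup.map hα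
          rw [Multiset.count_eq_one_of_mem hnd ha, count_roots]
          exact (rootMultiplicity_pos hfne).mpr (hfz i hi)
        · simp [Multiset.count_eq_zero_of_notMem ha]
      have := (Multiset.prod_X_sub_C_dvd_iff_le_roots hfne (I.val.map α)).mpr hle
      rw [hP, Finset.prod_eq_multiset_prod]
      simpa [Multiset.map_map, Function.comp] using this
    obtain ⟨q, hq⟩ := hdvd
    have hqne : q ≠ 0 := by rintro rfl; simp [hq] at hfne
    have hqdeg : q.natDegree = 0 := by
      have := natDegree_mul (hPmonic.ne_zero) hqne
      rw [← hq, hPdeg] at this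
      omega
    obtain ⟨c, rfl⟩ := natDegree_eq_zero.mp hqdeg
    have hcne : c ≠ 0 := by rintro rfl; simp [hq] at hfne
    have h1 : f.coeff k = c := by rw [hq, coeff_mul_C, hPk, one_mul]
    have h2 : f.coeff (k - 1) = (-∑ i ∈ I, α i) * c := by
      rw [hq, coeff_mul_C, hPk1]
    rw [h1, h2] at hc
    have h3 : c * (1 + η * ∑ i ∈ I, α i) = 0 := by linear_combination hc
    rcases mul_eq_zero.mp h3 with h | h
    · exact absurd h hcne
    · linear_combination h
  · intro hsum
    refine ⟨P, ?_, hPmonic.ne_zero, fun i hi => ?_⟩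
    · rw [mem_twistedSpace_iff hk]
      refine ⟨le_of_eq hPdeg, ?_⟩
      rw [hPk, hPk1, mul_neg]
      linear_combination hsum
    · rw [hP, eval_prod]
      exact Finset.prod_eq_zero hi (by simp)
end

section
/- Suppose n - k is odd. Let f ∈ 𝔽_q[x] with deg f ≤ k, and let y = (y_1,…,y_n) ∈ 𝔽_q^n satisfy |{ j : y_j ≠ f(α_j) }| ≤ (n-k-1)/2. Let g, p ∈ 𝔽_q[x] be polynomials, not both zero, with deg p ≤ (n-k-1)/2 and deg g ≤ (n+k-1)/2, such that g(α_j) = p(α_j)·y_j for every j = 1,…,n. Then g = p·f (in particular p ≠ 0, p divides g, and the quotient g/p equals f). -/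
open Polynomial

/-- Correctness of the Gaussian-elimination decoding algorithm when `n - k` is odd:
if `y` differs from the evaluation vector of `f` (`deg f ≤ k`) in at most
`(n-k-1)/2` positions, then any not-both-zero solution `(g, p)` of the
interpolation system with `deg p ≤ (n-k-1)/2` and `deg g ≤ (n+k-1)/2`
satisfies `g = p · f`. -/
theorem decoding_mds_odd {F : Type*} [Field F] [DecidableEq F] {n k : ℕ}
    (hk : 1 ≤ k) (hkn : k < n) (hodd : Odd (n - k))
    (α : Fin n → F) (hα : Function.Injective α)
    (f : Polynomial F) (hf : f.natDegree ≤ k) (y : Fin n → F)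
    (herr : (Finset.univ.filter fun j => y j ≠ f.eval (α j)).card ≤ (n - k - 1) / 2)
    (g p : Polynomial F) (hgp : ¬(g = 0 ∧ p = 0))
    (hp : p.natDegree ≤ (n - k - 1) / 2) (hg : g.natDegree ≤ (n + k - 1) / 2)
    (heq : ∀ j, g.eval (α j) = p.eval (α j) * y j) :
    g = p * f := by
  obtain ⟨m, hm⟩ := hodd
  have hn : n = k + 2 * m + 1 := by omega
  set h := g - p * f with hh
  by_contra hne
  have hne' : h ≠ 0 := sub_ne_zero.mpr hne
  have hdeg : h.natDegree ≤ m + k := by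
    refine le_trans (natDegree_sub_le _ _) (max_le ?_ ?_)
    · omega
    · exact le_trans natDegree_mul_le (by omega)
  set S := Finset.univ.filter (fun j => y j = f.eval (α j)) with hS
  have hcardS : n - m ≤ S.card := by
    have h1 : S.card + (Finset.univ.filter fun j => y j ≠ f.eval (α j)).card = n := by
      simpa [hS, ne_eq] using Finset.card_filter_add_card_filter_not
        (s := (Finset.univ : Finset (Fin n))) (p := fun j => y j = f.eval (α j))
    have h2 : (n - k - 1) / 2 = m := by omega
    omega
  have himg : (S.image α) ⊆ h.roots.toFinset := by
    intro x hx
    simp only [Finset.mem_image] at hx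
    obtain ⟨j, hj, rfl⟩ := hx
    simp only [hS, Finset.mem_filter] at hj
    rw [Multiset.mem_toFinset, mem_roots hne']
    have : h.eval (α j) = 0 := by
      simp [hh, heq j, hj.2]
    exact this
  have hcard2 : S.card ≤ h.natDegree := by
    calc S.card = (S.image α).card := (Finset.card_image_of_injective S hα).symm
      _ ≤ h.roots.toFinset.card := Finset.card_le_card himg
      _ ≤ Multiset.card h.roots := h.roots.toFinset_card_le
      _ ≤ h.natDegree := h.card_roots'
  omega
end

section
/- Suppose n - k is odd and that η·∑_{i∈I} α_i ≠ -1 for every subset I ⊆ {1,…,n} with |I| = k. Let y ∈ 𝔽_q^n and let f_1, f_2 ∈ V_{(k,1,k-1,η)} be twisted polynomials such that the Hamming distance between (f_i(α_1),…,f_i(α_n)) and y is at most (n-k-1)/2 for i = 1, 2. Then f_1 = f_2; that is, the decoding algorithm correcting up to ⌊(n-k)/2⌋ errors has a unique output. -/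
open Polynomial

lemma natDegree_twisted_le {F : Type*} [Field F] {k ℓ : ℕ} {hℓ : ℓ < k} {η : F}
    {f : Polynomial F} (hf : f ∈ twistedSpace k ℓ hℓ η) : f.natDegree ≤ k := by
  obtain ⟨a, rfl⟩ := hf
  refine (Polynomial.natDegree_add_le _ _).trans (max_le ?_ ?_)
  · refine (Polynomial.natDegree_sum_le _ _).trans ?_
    rw [Finset.fold_max_le]
    refine ⟨Nat.zero_le _, fun i _ => ?_⟩
    exact (Polynomial.natDegree_C_mul_X_pow_le _ _).trans (le_of_lt i.isLt)
  · exact Polynomial.natDegree_C_mul_X_pow_le _ _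

/-- Uniqueness of decoding up to `⌊(n-k)/2⌋ = (n-k-1)/2` errors for the MDS TGRS
code with `n - k` odd. -/
theorem decoding_unique_mds_odd {F : Type*} [Field F] [DecidableEq F] {n k : ℕ}
    (hk : 1 ≤ k) (hkn : k < n) (hodd : Odd (n - k))
    (α : Fin n → F) (hα : Function.Injective α) (η : F) (hη : η ≠ 0)
    (hmds : ∀ I : Finset (Fin n), I.card = k → η * ∑ i ∈ I, α i ≠ -1)
    (y : Fin n → F)
    (f₁ f₂ : Polynomial F)
    (hf₁ : f₁ ∈ twistedSpace k (k - 1) (Nat.sub_lt hk Nat.one_pos) η)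
    (hf₂ : f₂ ∈ twistedSpace k (k - 1) (Nat.sub_lt hk Nat.one_pos) η)
    (hd₁ : hammingDist (fun j => f₁.eval (α j)) y ≤ (n - k - 1) / 2)
    (hd₂ : hammingDist (fun j => f₂.eval (α j)) y ≤ (n - k - 1) / 2) :
    f₁ = f₂ := by
  have hg : (f₁ - f₂).natDegree ≤ k :=
    (Polynomial.natDegree_sub_le _ _).trans
      (max_le (natDegree_twisted_le hf₁) (natDegree_twisted_le hf₂))
  have hdist : hammingDist (fun j => f₁.eval (α j)) (fun j => f₂.eval (α j))
      ≤ n - k - 1 := by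
    have htri := hammingDist_triangle (fun j => f₁.eval (α j)) y
      (fun j => f₂.eval (α j))
    rw [hammingDist_comm y] at htri
    omega
  set S : Finset (Fin n) :=
    Finset.univ.filter (fun j => f₁.eval (α j) = f₂.eval (α j)) with hSdef
  have hsplit := Finset.card_filter_add_card_filter_not
    (s := (Finset.univ : Finset (Fin n)))
    (p := fun j => f₁.eval (α j) = f₂.eval (α j))
  have hDeq : (Finset.univ.filter
      (fun j => ¬ f₁.eval (α j) = f₂.eval (α j))).card
      = hammingDist (fun j => f₁.eval (α j)) (fun j => f₂.eval (α j)) := rfl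
  have hcardn : (Finset.univ : Finset (Fin n)).card = n := Finset.card_univ.trans
    (Fintype.card_fin n)
  rw [← hSdef] at hsplit
  have hS : k + 1 ≤ S.card := by omega
  have hzero : f₁ - f₂ = 0 := by
    refine Polynomial.eq_zero_of_natDegree_lt_card_of_eval_eq_zero (f₁ - f₂)
      (f := fun j : S => α j) (fun j j' h => Subtype.ext (hα h)) ?_ ?_
    · rintro ⟨j, hj⟩
      simp only [hSdef, Finset.mem_filter] at hj
      simp [Polynomial.eval_sub, hj.2]
    · rw [Fintype.card_coe]
      omega
  exact sub_eq_zero.mp hzero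
end

section
/- Suppose n - k is even and that η·∑_{i∈I} α_i ≠ -1 for every subset I ⊆ {1,…,n} with |I| = k. Let y ∈ 𝔽_q^n and let f_1, f_2 ∈ V_{(k,1,k-1,η)} be twisted polynomials such that the Hamming distance between (f_i(α_1),…,f_i(α_n)) and y is at most (n-k)/2 - 1 for i = 1, 2. Then f_1 = f_2; that is, the decoding algorithm correcting up to (n-k)/2 - 1 errors has a unique output. -/
open Polynomial

private theorem tw_coeff {F : Type*} [Field F] {k : ℕ} (η : F) (b : Fin k → F) (hk : 0 < k) (m : ℕ) :
    ((∑ i : Fin k, C (b i) * X ^ (i : ℕ)) + C (η * b ⟨k-1, Nat.sub_lt hk one_pos⟩) * X ^ k).coeff m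
    = if m = k then η * b ⟨k-1, Nat.sub_lt hk one_pos⟩ else if h : m < k then b ⟨m, h⟩ else 0 := by
  rw [coeff_add, coeff_C_mul, coeff_X_pow, Polynomial.finset_sum_coeff]
  simp only [coeff_C_mul, coeff_X_pow]
  by_cases hmk : m = k
  · rw [if_pos hmk, if_pos hmk, mul_one, Finset.sum_eq_zero, zero_add]
    intro i _
    rw [if_neg (by omega : ¬ m = (i:ℕ)), mul_zero]
  · rw [if_neg hmk, if_neg hmk, mul_zero, add_zero]
    by_cases hm : m < k
    · rw [dif_pos hm, Finset.sum_eq_single (⟨m, hm⟩ : Fin k)]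
      · simp
      · intro i _ hi
        rw [if_neg (by simp [Fin.ext_iff, eq_comm] at hi ⊢; omega), mul_zero]
      · simp
    · rw [dif_neg hm, Finset.sum_eq_zero]
      intro i _
      rw [if_neg (by omega : ¬ m = (i:ℕ)), mul_zero]



/-- Uniqueness of decoding up to `(n-k)/2 - 1` errors for the MDS TGRS code
with `n - k` even. -/
theorem decoding_unique_mds_even {F : Type*} [Field F] [DecidableEq F] {n k : ℕ}
    (hk : 1 ≤ k) (hkn : k < n) (heven : Even (n - k)) (hnk : 2 ≤ n - k)
    (α : Fin n → F) (hα : Function.Injective α) (η : F) (hη : η ≠ 0)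
    (hmds : ∀ I : Finset (Fin n), I.card = k → η * ∑ i ∈ I, α i ≠ -1)
    (y : Fin n → F)
    (f₁ f₂ : Polynomial F)
    (hf₁ : f₁ ∈ twistedSpace k (k - 1) (Nat.sub_lt hk Nat.one_pos) η)
    (hf₂ : f₂ ∈ twistedSpace k (k - 1) (Nat.sub_lt hk Nat.one_pos) η)
    (hd₁ : hammingDist (fun j => f₁.eval (α j)) y ≤ (n - k) / 2 - 1)
    (hd₂ : hammingDist (fun j => f₂.eval (α j)) y ≤ (n - k) / 2 - 1) :
    f₁ = f₂ := by
  obtain ⟨a₁, ha₁⟩ := hf₁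
  obtain ⟨a₂, ha₂⟩ := hf₂
  by_contra hne
  set b : Fin k → F := a₁ - a₂ with hb_def
  set g : Polynomial F := f₁ - f₂ with hg_def
  have hg : g = (∑ i : Fin k, C (b i) * X ^ (i : ℕ))
      + C (η * b ⟨k-1, Nat.sub_lt hk one_pos⟩) * X ^ k := by
    rw [hg_def, ha₁, ha₂]
    simp only [hb_def, Pi.sub_apply, map_sub, mul_sub, sub_mul, Finset.sum_sub_distrib]
    ring
  have hcoeff : ∀ m, g.coeff m = if m = k then η * b ⟨k-1, Nat.sub_lt hk one_pos⟩
      else if h : m < k then b ⟨m, h⟩ else 0 := by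
    intro m; rw [hg]; exact tw_coeff η b hk m
  have hg0 : g ≠ 0 := sub_ne_zero.mpr hne
  -- Hamming distance bound
  obtain ⟨m0, hm0⟩ := heven
  have hD : hammingDist (fun j => f₁.eval (α j)) (fun j => f₂.eval (α j)) ≤ n - k - 2 := by
    calc hammingDist (fun j => f₁.eval (α j)) (fun j => f₂.eval (α j))
        ≤ hammingDist (fun j => f₁.eval (α j)) y
          + hammingDist y (fun j => f₂.eval (α j)) := hammingDist_triangle _ _ _
      _ ≤ (n - k) / 2 - 1 + ((n - k) / 2 - 1) := by
          rw [hammingDist_comm y]; exact Nat.add_le_add hd₁ hd₂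
      _ ≤ n - k - 2 := by omega
  set S : Finset (Fin n) := Finset.univ.filter (fun j => g.eval (α j) = 0) with hS_def
  have hScard : k ≤ S.card := by
    have h1 : S.card + hammingDist (fun j => f₁.eval (α j)) (fun j => f₂.eval (α j))
        = n := by
      rw [hammingDist]
      have : ({i | (fun j => f₁.eval (α j)) i ≠ (fun j => f₂.eval (α j)) i} : Finset (Fin n))
          = Finset.univ.filter (fun j => ¬ g.eval (α j) = 0) := by
        ext j
        simp [hg_def, sub_eq_zero]
      rw [this, hS_def, Finset.card_filter_add_card_filter_not]
      exact Finset.card_fin n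
    omega
  obtain ⟨I, hIS, hIcard⟩ := Finset.exists_subset_card_eq hScard
  have hroots : ∀ i ∈ I, g.eval (α i) = 0 := by
    intro i hi
    have := hIS hi
    rw [hS_def, Finset.mem_filter] at this
    exact this.2
  -- k ≤ natDegree
  have hkdeg : k ≤ g.natDegree := by
    have himg : I.image α ⊆ g.roots.toFinset := by
      intro x hx
      obtain ⟨i, hi, rfl⟩ := Finset.mem_image.mp hx
      rw [Multiset.mem_toFinset, mem_roots hg0]
      exact hroots i hi
    calc k = (I.image α).card := by rw [Finset.card_image_of_injective I hα, hIcard]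
      _ ≤ g.roots.toFinset.card := Finset.card_le_card himg
      _ ≤ Multiset.card g.roots := Multiset.toFinset_card_le _
      _ ≤ g.natDegree := g.card_roots' 
  by_cases hbtop : b ⟨k-1, Nat.sub_lt hk one_pos⟩ = 0
  · -- degree ≤ k-1 contradiction
    have : g.natDegree ≤ k - 1 := by
      rw [Polynomial.natDegree_le_iff_coeff_eq_zero]
      intro N hN
      rw [hcoeff N]
      rcases eq_or_ne N k with rfl | h
      · rw [if_pos rfl, hbtop, mul_zero]
      · rw [if_neg h, dif_neg (by omega)]
    omega
  · have hdegle : g.natDegree ≤ k := by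
      rw [Polynomial.natDegree_le_iff_coeff_eq_zero]
      intro N hN
      rw [hcoeff N, if_neg (by omega), dif_neg (by omega)]
    have hdeg : g.natDegree = k := le_antisymm hdegle hkdeg
    set P : Polynomial F := ∏ i ∈ I, (X - C (α i)) with hP_def
    have hPm : P.Monic := monic_prod_of_monic _ _ (fun i _ => monic_X_sub_C (α i))
    have hPdeg : P.natDegree = k := by
      rw [hP_def, natDegree_prod _ _ (fun i _ => X_sub_C_ne_zero (α i))]
      simp [natDegree_X_sub_C, hIcard]
    have hdvd : P ∣ g := by
      have hle : Multiset.map α I.val ≤ g.roots := by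
        rw [Multiset.le_iff_subset (I.nodup.map hα)]
        intro x hx
        obtain ⟨i, hi, rfl⟩ := Multiset.mem_map.mp hx
        rw [mem_roots hg0]
        exact hroots i hi
      have : P = ((Multiset.map α I.val).map fun a => X - C a).prod := by
        rw [hP_def, Multiset.map_map, Finset.prod]
        rfl
      rw [this]
      exact dvd_trans (Multiset.prod_dvd_prod_of_le (Multiset.map_le_map hle))
        (prod_multiset_X_sub_C_dvd g)
    obtain ⟨q, hq⟩ := hdvd
    have hq0 : q ≠ 0 := by rintro rfl; simp at hq; exact hg0 hq
    have hqdeg : q.natDegree = 0 := by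
      have := natDegree_mul (hPm.ne_zero) hq0
      rw [← hq, hdeg, hPdeg] at this
      omega
    obtain ⟨c, rfl⟩ := Polynomial.natDegree_eq_zero.mp hqdeg
    have hck : c = η * b ⟨k-1, Nat.sub_lt hk one_pos⟩ := by
      have h1 : g.coeff k = η * b ⟨k-1, Nat.sub_lt hk one_pos⟩ := by
        rw [hcoeff k, if_pos rfl]
      have h2 : g.coeff k = c := by
        rw [hq, coeff_mul_C, ← hPdeg, hPm.coeff_natDegree, one_mul]
      rw [← h2, h1]
    have hsum : g.coeff (k-1) = c * (-∑ i ∈ I, α i) := by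
      rw [hq, coeff_mul_C, mul_comm]
      congr 1
      have := Polynomial.prod_X_sub_C_coeff_card_pred I α (by rw [hIcard]; omega)
      rw [hIcard] at this
      exact this
    rw [hcoeff (k-1), if_neg (by omega), dif_pos (Nat.sub_lt hk one_pos)] at hsum
    apply hmds I hIcard
    have h1 : (1 : F) = η * (-∑ i ∈ I, α i) := by
      rw [hck] at hsum
      apply mul_left_cancel₀ hbtop
      rw [mul_one]
      linear_combination hsum
    linear_combination h1
end

section
/- Let f ∈ 𝔽_q[x] with deg f ≤ k, and let y = (y_1,…,y_n) ∈ 𝔽_q^n satisfy |{ j : y_j ≠ f(α_j) }| ≤ ⌊(n-k-1)/2⌋. Let g, p ∈ 𝔽_q[x] be polynomials, not both zero, with deg p ≤ ⌊(n-k-1)/2⌋ and deg g ≤ k + ⌈(n-k-1)/2⌉, such that g(α_j) = p(α_j)·y_j for every j = 1,…,n. Then g = p·f (in particular p ≠ 0, p divides g, and the quotient g/p equals f). -/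
open Polynomial

/-- Correctness of the Gaussian-elimination decoding algorithm for NMDS TGRS codes:
if `y` differs from the evaluation vector of `f` (`deg f ≤ k`) in at most
`⌊(n-k-1)/2⌋` positions, then any not-both-zero solution `(g, p)` of the
interpolation system with `deg p ≤ ⌊(n-k-1)/2⌋` and
`deg g ≤ k + ⌈(n-k-1)/2⌉` (note `⌈(n-k-1)/2⌉ = (n-k)/2` in ℕ since `k < n`)
satisfies `g = p · f`. -/
theorem decoding_nmds {F : Type*} [Field F] [DecidableEq F] {n k : ℕ}
    (hk : 1 ≤ k) (hkn : k < n)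
    (α : Fin n → F) (hα : Function.Injective α)
    (f : Polynomial F) (hf : f.natDegree ≤ k) (y : Fin n → F)
    (herr : (Finset.univ.filter fun j => y j ≠ f.eval (α j)).card ≤ (n - k - 1) / 2)
    (g p : Polynomial F) (hgp : ¬(g = 0 ∧ p = 0))
    (hp : p.natDegree ≤ (n - k - 1) / 2) (hg : g.natDegree ≤ k + (n - k) / 2)
    (heq : ∀ j, g.eval (α j) = p.eval (α j) * y j) :
    g = p * f := by
  set S : Finset F := (Finset.univ.filter fun j => y j = f.eval (α j)).image α with hS
  have hScard : n - (n - k - 1) / 2 ≤ S.card := by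
    rw [hS, Finset.card_image_of_injective _ hα]
    have h1 : (Finset.univ.filter fun j => y j = f.eval (α j)).card
        + (Finset.univ.filter fun j => y j ≠ f.eval (α j)).card = n := by
      rw [Finset.card_filter_add_card_filter_not]
      simp
    omega
  have hdeg : (g - p * f).natDegree ≤ k + (n - k) / 2 := by
    refine le_trans (natDegree_sub_le _ _) (max_le hg ?_)
    refine le_trans (natDegree_mul_le) ?_
    have : p.natDegree + f.natDegree ≤ (n - k - 1) / 2 + k := add_le_add hp hf
    omega
  have hzero : g - p * f = 0 := by
    apply Polynomial.eq_zero_of_natDegree_lt_card_of_eval_eq_zero' _ S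
    · intro x hx
      rw [hS, Finset.mem_image] at hx
      obtain ⟨j, hj, rfl⟩ := hx
      rw [Finset.mem_filter] at hj
      simp [heq j, hj.2]
    · have : k + (n - k) / 2 < n - (n - k - 1) / 2 := by omega
      omega
  linear_combination hzero
end

section
/- The twisted generalized Reed–Solomon code C_{k,1,k-1}(α,𝟏,η) is near MDS — that is, its minimum Hamming distance equals n-k and the minimum Hamming distance of its dual code C^⊥ equals k — if and only if there exists a subset I ⊆ {1,…,n} with |I| = k such that η·∑_{i∈I} α_i = -1. -/
open Polynomial

/-- The twisted generalized Reed–Solomon code `C_{k,1,ℓ}(α, 1, η)`. -/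
def tgrsCode {F : Type*} [Field F] {n : ℕ} (k ℓ : ℕ) (hℓ : ℓ < k)
    (α : Fin n → F) (η : F) : Set (Fin n → F) :=
  {v | ∃ f ∈ twistedSpace k ℓ hℓ η, ∀ j, v j = f.eval (α j)}

/-- The dual code of a code `C ⊆ F^n`. -/
def dualCode {F : Type*} [Field F] {n : ℕ} (C : Set (Fin n → F)) :
    Set (Fin n → F) :=
  {x | ∀ c ∈ C, ∑ i, x i * c i = 0}

section Aux

set_option linter.unusedSectionVars false

open Finset

variable {F : Type*} [Field F] [DecidableEq F]

private lemma eq_sum_fin (k : ℕ) (p : F[X]) (h : p.natDegree < k) :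
    p = ∑ i : Fin k, C (p.coeff i) * X ^ (i : ℕ) := by
  conv_lhs => rw [p.as_sum_range' k h]
  rw [Fin.sum_univ_eq_sum_range (fun i => C (p.coeff i) * X ^ i)]
  simp [C_mul_X_pow_eq_monomial]

private lemma cs_coeff_lt (k : ℕ) (a : Fin k → F) {j : ℕ} (hj : j < k) :
    (∑ i : Fin k, C (a i) * X ^ (i : ℕ)).coeff j = a ⟨j, hj⟩ := by
  rw [finset_sum_coeff]
  have : ∀ i : Fin k, (C (a i) * X ^ (i : ℕ)).coeff j = if i = ⟨j, hj⟩ then a i else 0 := by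
    intro i
    rw [coeff_C_mul, coeff_X_pow]
    by_cases h : i = ⟨j, hj⟩
    · simp [h]
    · rw [if_neg h, if_neg fun hji => h (Fin.ext hji.symm), mul_zero]
  simp_rw [this]
  simp

private lemma cs_coeff_ge (k : ℕ) (a : Fin k → F) {j : ℕ} (hj : k ≤ j) :
    (∑ i : Fin k, C (a i) * X ^ (i : ℕ)).coeff j = 0 := by
  rw [finset_sum_coeff]
  apply Finset.sum_eq_zero
  intro i _
  rw [coeff_C_mul, coeff_X_pow, if_neg (by omega : ¬ j = (i : ℕ)), mul_zero]

private lemma cs_natDegree_lt (k : ℕ) (hk : 1 ≤ k) (a : Fin k → F) :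
    (∑ i : Fin k, C (a i) * X ^ (i : ℕ)).natDegree < k := by
  have : (∑ i : Fin k, C (a i) * X ^ (i : ℕ)).natDegree ≤ k - 1 := by
    rw [natDegree_le_iff_coeff_eq_zero]
    intro m hm
    exact cs_coeff_ge k a (by omega)
  omega

private lemma mem_twisted_of_coeff_zero {k : ℕ} (hk : 1 ≤ k) (η : F) (p : F[X])
    (h : p.natDegree < k) (h2 : p.coeff (k-1) = 0) :
    p ∈ twistedSpace k (k-1) (Nat.sub_lt hk Nat.one_pos) η := by
  refine ⟨fun i => p.coeff i, ?_⟩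
  simp only [h2, mul_zero, map_zero, zero_mul, add_zero]
  exact eq_sum_fin k p h

private lemma mem_twisted_of_coeff_k {k : ℕ} (hk : 1 ≤ k) (η : F) (p : F[X])
    (h : p.natDegree < k + 1) (h2 : p.coeff k = η * p.coeff (k-1)) :
    p ∈ twistedSpace k (k-1) (Nat.sub_lt hk Nat.one_pos) η := by
  refine ⟨fun i => p.coeff i, ?_⟩
  have h3 := p.as_sum_range' (k+1) h
  rw [Finset.sum_range_succ] at h3
  conv_lhs => rw [h3]
  congr 1
  · rw [Fin.sum_univ_eq_sum_range (fun i : ℕ => C (p.coeff i) * X ^ i)]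
    simp [C_mul_X_pow_eq_monomial]
  · rw [C_mul_X_pow_eq_monomial]; exact congrArg _ h2

private lemma twisted_natDegree_le {k ℓ : ℕ} {hℓ : ℓ < k} {η : F} {f : F[X]}
    (hf : f ∈ twistedSpace k ℓ hℓ η) : f.natDegree ≤ k := by
  obtain ⟨a, rfl⟩ := hf
  refine (natDegree_add_le _ _).trans (max_le ?_ ?_)
  · refine natDegree_sum_le_of_forall_le _ _ fun i _ => ?_
    exact (natDegree_C_mul_le _ _).trans (by simp only [natDegree_X_pow]; omega)
  · exact (natDegree_C_mul_le _ _).trans (by simp)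

private lemma card_le_natDegree {n : ℕ} {α : Fin n → F} (hα : Function.Injective α)
    {f : F[X]} (hf : f ≠ 0) (S : Finset (Fin n)) (hS : ∀ j ∈ S, f.eval (α j) = 0) :
    S.card ≤ f.natDegree := by
  have h1 : #S ≤ #f.roots.toFinset := by
    apply Finset.card_le_card_of_injOn α
    · intro j hj
      rw [Finset.mem_coe, Multiset.mem_toFinset, mem_roots hf]
      exact hS j hj
    · exact hα.injOn
  exact h1.trans ((f.roots.toFinset_card_le).trans f.card_roots')

private lemma norm_add_zeros {n : ℕ} (v : Fin n → F) :
    hammingNorm v + #(Finset.univ.filter fun j => v j = 0) = n := by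
  have := Finset.card_filter_add_card_filter_not
    (s := (Finset.univ : Finset (Fin n))) (p := fun j => v j = 0)
  rw [Finset.card_univ, Fintype.card_fin] at this
  rw [hammingNorm]
  simp only [ne_eq]
  omega

private lemma basis_coeff (s : Finset F) {x : F} (hx : x ∈ s) :
    (Lagrange.basis s id x).coeff (#s - 1) = ∏ y ∈ s.erase x, (x - y)⁻¹ := by
  rw [Lagrange.basis]
  simp only [Lagrange.basisDivisor, id]
  rw [Finset.prod_mul_distrib, ← map_prod, coeff_C_mul]
  have hmonic : (∏ y ∈ s.erase x, (X - C y)).Monic :=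
    monic_prod_of_monic _ _ fun y _ => monic_X_sub_C y
  have hdeg : (∏ y ∈ s.erase x, (X - C y)).natDegree = #s - 1 := by
    rw [natDegree_prod _ _ fun y _ => X_sub_C_ne_zero y]
    simp [Finset.card_erase_of_mem hx]
  rw [← hdeg, hmonic.coeff_natDegree, mul_one]

private lemma lagrange_coeff_sum (s : Finset F) (p : F[X]) (hp : p.degree < (#s : ℕ)) :
    ∑ x ∈ s, p.eval x * ∏ y ∈ s.erase x, (x - y)⁻¹ = p.coeff (#s - 1) := by
  have h := Lagrange.eq_interpolate (s := s) (v := id) (Set.injOn_id _) hp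
  have h2 : p.coeff (#s - 1)
      = (Lagrange.interpolate s id fun i => p.eval (id i)).coeff (#s - 1) := by rw [← h]
  rw [h2, Lagrange.interpolate_apply, finset_sum_coeff]
  apply Finset.sum_congr rfl
  intro x hx
  rw [coeff_C_mul, basis_coeff s hx, id]

private lemma dual_pairing {n : ℕ} {α : Fin n → F} (hα : Function.Injective α)
    (I : Finset (Fin n)) (q : F[X]) (hq : q.degree < (#I : ℕ)) :
    ∑ i ∈ I, q.eval (α i) * ∏ j ∈ I.erase i, (α i - α j)⁻¹ = q.coeff (#I - 1) := by
  have hcard : #(I.image α) = #I := Finset.card_image_of_injective I hα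
  have h := lagrange_coeff_sum (I.image α) q (by rwa [hcard])
  rw [hcard] at h
  rw [← h, Finset.sum_image (fun i _ j _ hh => hα hh)]
  apply Finset.sum_congr rfl
  intro i hi
  congr 1
  rw [← Finset.image_erase hα, Finset.prod_image (fun a _ b _ hh => hα hh)]

end Aux
section Main

set_option linter.unusedSectionVars false

open Finset

variable {F : Type*} [Field F] [DecidableEq F] {n k : ℕ}

private lemma primal_lb (hk : 1 ≤ k) (hkn : k < n)
    (α : Fin n → F) (hα : Function.Injective α) (η : F)
    {v : Fin n → F} (hv : v ∈ tgrsCode k (k - 1) (Nat.sub_lt hk Nat.one_pos) α η)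
    (hv0 : v ≠ 0) : n - k ≤ hammingNorm v := by
  obtain ⟨f, hf, hfv⟩ := hv
  have hfne : f ≠ 0 := by
    rintro rfl
    exact hv0 (funext fun j => by rw [hfv j, eval_zero]; rfl)
  have hz : #(Finset.univ.filter fun j => v j = 0) ≤ k := by
    refine (card_le_natDegree hα hfne _ fun j hj => ?_).trans (twisted_natDegree_le hf)
    rw [← hfv j]
    exact (Finset.mem_filter.mp hj).2
  have := norm_add_zeros v
  omega

private lemma dual_lb (hk : 1 ≤ k) (hkn : k < n)
    (α : Fin n → F) (hα : Function.Injective α) (η : F)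
    {x : Fin n → F} (hx : x ∈ dualCode (tgrsCode k (k - 1) (Nat.sub_lt hk Nat.one_pos) α η))
    (hx0 : x ≠ 0) : k ≤ hammingNorm x := by
  by_contra hlt
  push_neg at hlt
  set S : Finset (Fin n) := Finset.univ.filter fun j => x j ≠ 0 with hS
  have hScard : #S = hammingNorm x := rfl
  obtain ⟨i0, hi0⟩ : ∃ i0, x i0 ≠ 0 := Function.ne_iff.mp hx0
  have hi0S : i0 ∈ S := by simp [hS, hi0]
  have hS1 : 1 ≤ #S := Finset.card_pos.mpr ⟨i0, hi0S⟩
  set p : F[X] := ∏ j ∈ S.erase i0, (X - C (α j)) with hp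
  have hpdeg : p.natDegree = #S - 1 := by
    rw [hp, natDegree_prod _ _ fun j _ => X_sub_C_ne_zero _]
    simp [Finset.card_erase_of_mem hi0S]
  have hpmem : p ∈ twistedSpace k (k-1) (Nat.sub_lt hk Nat.one_pos) η := by
    refine mem_twisted_of_coeff_zero hk η p (by omega) ?_
    exact coeff_eq_zero_of_natDegree_lt (by omega)
  have hczero := hx (fun j => p.eval (α j)) ⟨p, hpmem, fun j => rfl⟩
  have hsum : ∑ i, x i * p.eval (α i) = ∑ i ∈ S, x i * p.eval (α i) := by
    refine (Finset.sum_subset (Finset.subset_univ S) fun j _ hj => ?_).symm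
    have : x j = 0 := by
      by_contra hne
      exact hj (by simp [hS, hne])
    rw [this, zero_mul]
  have hsingle : ∑ i ∈ S, x i * p.eval (α i) = x i0 * p.eval (α i0) := by
    refine Finset.sum_eq_single_of_mem i0 hi0S fun j hj hne => ?_
    have : p.eval (α j) = 0 := by
      rw [hp, eval_prod]
      exact Finset.prod_eq_zero (Finset.mem_erase.mpr ⟨hne, hj⟩) (by simp)
    rw [this, mul_zero]
  have hpeval : p.eval (α i0) ≠ 0 := by
    rw [hp, eval_prod]
    refine Finset.prod_ne_zero_iff.mpr fun j hj => ?_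
    simp only [eval_sub, eval_X, eval_C]
    exact sub_ne_zero.mpr fun h => (Finset.mem_erase.mp hj).1 (hα h.symm)
  rw [hsum, hsingle] at hczero
  exact hi0 ((mul_eq_zero.mp hczero).resolve_right hpeval)

end Main
section Main2

set_option linter.unusedSectionVars false
set_option linter.unusedVariables false

open Finset

variable {F : Type*} [Field F] [DecidableEq F] {n k : ℕ}

private lemma primal_exists (hk : 1 ≤ k) (hkn : k < n)
    (α : Fin n → F) (hα : Function.Injective α) (η : F) (hη : η ≠ 0)
    (I : Finset (Fin n)) (hI : #I = k) (hsum : η * ∑ i ∈ I, α i = -1) :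
    ∃ v ∈ tgrsCode k (k - 1) (Nat.sub_lt hk Nat.one_pos) α η,
      v ≠ 0 ∧ hammingNorm v = n - k := by
  set N : F[X] := ∏ i ∈ I, (X - C (α i)) with hN
  have hNmonic : N.Monic := monic_prod_of_monic _ _ fun i _ => monic_X_sub_C _
  have hNdeg : N.natDegree = k := by
    rw [hN, natDegree_prod _ _ fun i _ => X_sub_C_ne_zero _]
    simp [hI]
  set f : F[X] := C η * N with hf
  have hfdeg : f.natDegree ≤ k := (natDegree_C_mul_le _ _).trans hNdeg.le
  have hfk : f.coeff k = η := by
    rw [hf, coeff_C_mul, ← hNdeg, hNmonic.coeff_natDegree, mul_one]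
  have hNk1 : N.coeff (k - 1) = -∑ i ∈ I, α i := by
    have h := prod_X_sub_C_coeff_card_pred I α (by omega : 0 < #I)
    rwa [hI] at h
  have hfk1 : f.coeff (k - 1) = 1 := by
    rw [hf, coeff_C_mul, hNk1, mul_neg, hsum, neg_neg]
  have hmem : f ∈ twistedSpace k (k-1) (Nat.sub_lt hk Nat.one_pos) η :=
    mem_twisted_of_coeff_k hk η f (by omega) (by rw [hfk, hfk1, mul_one])
  refine ⟨fun j => f.eval (α j), ⟨f, hmem, fun j => rfl⟩, ?_, ?_⟩
  · -- nonzero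
    obtain ⟨j, hj⟩ : ∃ j, j ∉ I := by
      by_contra hall
      push_neg at hall
      have : I = Finset.univ := Finset.eq_univ_iff_forall.mpr hall
      rw [this, Finset.card_univ, Fintype.card_fin] at hI
      omega
    intro h0
    have h1 : f.eval (α j) = 0 := congrFun h0 j
    rw [hf, eval_mul, eval_C, hN, eval_prod] at h1
    rcases mul_eq_zero.mp h1 with h2 | h2
    · exact hη h2
    · obtain ⟨i, hiI, hi⟩ := Finset.prod_eq_zero_iff.mp h2
      simp only [eval_sub, eval_X, eval_C, sub_eq_zero] at hi
      exact hj (hα hi ▸ hiI)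
  · -- norm
    have hzero : (Finset.univ.filter fun j => f.eval (α j) = 0) = I := by
      ext j
      simp only [Finset.mem_filter, Finset.mem_univ, true_and]
      rw [hf, eval_mul, eval_C, hN, eval_prod]
      constructor
      · intro h1
        rcases mul_eq_zero.mp h1 with h2 | h2
        · exact absurd h2 hη
        · obtain ⟨i, hiI, hi⟩ := Finset.prod_eq_zero_iff.mp h2
          simp only [eval_sub, eval_X, eval_C, sub_eq_zero] at hi
          exact hα hi ▸ hiI
      · intro hjI
        rw [Finset.prod_eq_zero hjI (by simp), mul_zero]
    have h2 := norm_add_zeros (fun j => f.eval (α j))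
    rw [hzero, hI] at h2
    omega

private lemma dual_exists (hk : 1 ≤ k) (hkn : k < n)
    (α : Fin n → F) (hα : Function.Injective α) (η : F) (hη : η ≠ 0)
    (I : Finset (Fin n)) (hI : #I = k) (hsum : η * ∑ i ∈ I, α i = -1) :
    ∃ v ∈ dualCode (tgrsCode k (k - 1) (Nat.sub_lt hk Nat.one_pos) α η),
      v ≠ 0 ∧ hammingNorm v = k := by
  set x : Fin n → F := fun i =>
    if i ∈ I then ∏ j ∈ I.erase i, (α i - α j)⁻¹ else 0 with hx
  have hxne : ∀ i ∈ I, x i ≠ 0 := by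
    intro i hi
    rw [hx]
    simp only [if_pos hi]
    refine Finset.prod_ne_zero_iff.mpr fun j hj => inv_ne_zero ?_
    exact sub_ne_zero.mpr fun h => (Finset.mem_erase.mp hj).1 (hα h).symm
  set N : F[X] := ∏ i ∈ I, (X - C (α i)) with hN
  have hNmonic : N.Monic := monic_prod_of_monic _ _ fun i _ => monic_X_sub_C _
  have hNdeg : N.natDegree = k := by
    rw [hN, natDegree_prod _ _ fun i _ => X_sub_C_ne_zero _]
    simp [hI]
  have hNk1 : N.coeff (k - 1) = -∑ i ∈ I, α i := by
    have h := prod_X_sub_C_coeff_card_pred I α (by omega : 0 < #I)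
    rwa [hI] at h
  have hNeval : ∀ i ∈ I, N.eval (α i) = 0 := by
    intro i hi
    rw [hN, eval_prod]
    exact Finset.prod_eq_zero hi (by simp)
  refine ⟨x, ?_, ?_, ?_⟩
  · -- membership in dual
    rintro c ⟨f, ⟨a, rfl⟩, hcv⟩
    set A : F := a ⟨k - 1, Nat.sub_lt hk Nat.one_pos⟩ with hA
    set g : F[X] := ∑ i : Fin k, C (a i) * X ^ (i : ℕ) with hg
    set q : F[X] := g + C (η * A) * (X ^ k - N) with hq
    have hrdeg : (X ^ k - N : F[X]).degree < (k : ℕ) := by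
      have h1 : (X ^ k : F[X]).degree = (k : ℕ) := degree_X_pow k
      have h2 : N.degree = (k : ℕ) := by
        rw [degree_eq_natDegree hNmonic.ne_zero, hNdeg]
      have := degree_sub_lt (h1.trans h2.symm) (pow_ne_zero k X_ne_zero)
        (by rw [leadingCoeff_X_pow, hNmonic.leadingCoeff])
      rwa [h1] at this
    have hqdeg : q.degree < (k : ℕ) := by
      refine (degree_add_le _ _).trans_lt (max_lt ?_ ?_)
      · exact degree_le_natDegree.trans_lt (Nat.cast_lt.mpr (cs_natDegree_lt k hk a))
      · rw [← smul_eq_C_mul]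
        exact (degree_smul_le _ _).trans_lt hrdeg
    have heval : ∀ i ∈ I, (g + C (η * A) * X ^ k).eval (α i) = q.eval (α i) := by
      intro i hi
      rw [hq]
      simp [hNeval i hi]
    have hqc : q.coeff (k - 1) = 0 := by
      rw [hq, coeff_add, coeff_C_mul, coeff_sub, hNk1, hg,
        cs_coeff_lt k a (Nat.sub_lt hk Nat.one_pos),
        coeff_X_pow, if_neg (by omega : ¬ k - 1 = k)]
      have : A + η * A * (0 - -∑ i ∈ I, α i) = A * (1 + η * ∑ i ∈ I, α i) := by ring
      rw [this, hsum]
      ring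
    have hpair := dual_pairing hα I q (by rwa [hI])
    rw [hI] at hpair
    have hred : ∑ i, x i * (g + C (η * A) * X ^ k).eval (α i)
        = ∑ i ∈ I, q.eval (α i) * ∏ j ∈ I.erase i, (α i - α j)⁻¹ := by
      rw [← Finset.sum_subset (Finset.subset_univ I) (fun j _ hj => by
        rw [hx]; simp [if_neg hj])]
      refine Finset.sum_congr rfl fun i hi => ?_
      rw [heval i hi]
      simp only [hx, if_pos hi]
      ring
    rw [show (∑ i, x i * c i) = ∑ i, x i * (g + C (η * A) * X ^ k).eval (α i) from
      Finset.sum_congr rfl fun i _ => by rw [hcv i]]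
    rw [hred, hpair, hqc]
  · -- nonzero
    obtain ⟨i, hi⟩ := Finset.card_pos.mp (by omega : 0 < #I)
    exact fun h0 => hxne i hi (congrFun h0 i)
  · -- norm
    have : (Finset.univ.filter fun i => x i ≠ 0) = I := by
      ext i
      simp only [Finset.mem_filter, Finset.mem_univ, true_and]
      constructor
      · intro h1
        by_contra hiI
        exact h1 (by rw [hx]; simp [if_neg hiI])
      · exact hxne i
    rw [hammingNorm]
    rw [show ({i | x i ≠ 0} : Finset (Fin n)) = Finset.univ.filter fun i => x i ≠ 0 from rfl,
      this, hI]

end Main2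
section Main3

set_option linter.unusedSectionVars false
set_option linter.unusedVariables false

open Finset

variable {F : Type*} [Field F] [DecidableEq F] {n k : ℕ}

private lemma forward_dir (hk : 1 ≤ k) (hkn : k < n)
    (α : Fin n → F) (hα : Function.Injective α) (η : F) (hη : η ≠ 0)
    {v : Fin n → F} (hv : v ∈ tgrsCode k (k - 1) (Nat.sub_lt hk Nat.one_pos) α η)
    (hv0 : v ≠ 0) (hnorm : hammingNorm v = n - k) :
    ∃ I : Finset (Fin n), I.card = k ∧ η * ∑ i ∈ I, α i = -1 := by
  obtain ⟨f, ⟨a, rfl⟩, hfv⟩ := hv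
  set A : F := a ⟨k - 1, Nat.sub_lt hk Nat.one_pos⟩ with hA
  set g : F[X] := ∑ i : Fin k, C (a i) * X ^ (i : ℕ) with hg
  set Z : Finset (Fin n) := Finset.univ.filter fun j => v j = 0 with hZ
  have hfne : g + C (η * A) * X ^ k ≠ 0 := by
    intro h
    exact hv0 (funext fun j => by rw [hfv j, h, eval_zero]; rfl)
  have hZcard : #Z = k := by
    have h1 := norm_add_zeros v
    rw [hnorm] at h1
    show #(Finset.univ.filter fun j => v j = 0) = k
    omega
  have hZroot : ∀ j ∈ Z, (g + C (η * A) * X ^ k).eval (α j) = 0 := by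
    intro j hj
    rw [← hfv j]
    exact (Finset.mem_filter.mp hj).2
  have hAne : A ≠ 0 := by
    intro hA0
    have hf0 : g + C (η * A) * X ^ k = g := by rw [hA0, mul_zero, map_zero, zero_mul, add_zero]
    have hgdeg : g.natDegree ≤ k - 2 := by
      rw [hg, natDegree_le_iff_coeff_eq_zero]
      intro m hm
      by_cases h : m < k
      · have hmk : m = k - 1 := by omega
        subst hmk
        rw [cs_coeff_lt k a (Nat.sub_lt hk Nat.one_pos), ← hA, hA0]
      · exact cs_coeff_ge k a (by omega)
    have := card_le_natDegree hα hfne Z hZroot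
    rw [hf0] at this
    omega
  -- f = C (η A) * ∏_{i ∈ Z} (X - C (α i))
  set N : F[X] := ∏ i ∈ Z, (X - C (α i)) with hN
  have hNmonic : N.Monic := monic_prod_of_monic _ _ fun i _ => monic_X_sub_C _
  have hNdeg : N.natDegree = k := by
    rw [hN, natDegree_prod _ _ fun i _ => X_sub_C_ne_zero _]
    simp [hZcard]
  have hNk1 : N.coeff (k - 1) = -∑ i ∈ Z, α i := by
    have h := prod_X_sub_C_coeff_card_pred Z α (by omega : 0 < #Z)
    rwa [hZcard] at h
  set q : F[X] := g + C (η * A) * X ^ k - C (η * A) * N with hq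
  have hfk : (g + C (η * A) * X ^ k).coeff k = η * A := by
    rw [coeff_add, hg, cs_coeff_ge k a le_rfl, coeff_C_mul, coeff_X_pow, if_pos rfl,
      mul_one, zero_add]
  have hfk1 : (g + C (η * A) * X ^ k).coeff (k - 1) = A := by
    rw [coeff_add, hg, cs_coeff_lt k a (Nat.sub_lt hk Nat.one_pos), coeff_C_mul,
      coeff_X_pow, if_neg (by omega : ¬ k - 1 = k), mul_zero, add_zero]
  have hqdeg : q.natDegree ≤ k - 1 := by
    rw [natDegree_le_iff_coeff_eq_zero]
    intro m hm
    have hmk : k ≤ m := by omega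
    rw [hq, coeff_sub, coeff_C_mul]
    rcases eq_or_lt_of_le hmk with h | h
    · rw [← h, hfk, ← hNdeg, hNmonic.coeff_natDegree, mul_one, sub_self]
    · rw [coeff_eq_zero_of_natDegree_lt (lt_of_le_of_lt ?_ h),
        coeff_eq_zero_of_natDegree_lt (by omega : N.natDegree < m), mul_zero, sub_zero]
      exact (natDegree_add_le _ _).trans (max_le (by rw [hg]; exact (cs_natDegree_lt k hk a).le)
        ((natDegree_C_mul_le _ _).trans (by simp)))
  have hq0 : q = 0 := by
    by_contra hqne
    have hroots : ∀ j ∈ Z, q.eval (α j) = 0 := by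
      intro j hj
      rw [hq, eval_sub, hZroot j hj, eval_mul, hN, eval_prod,
        Finset.prod_eq_zero hj (by simp), mul_zero, sub_zero]
    have := card_le_natDegree hα hqne Z hroots
    omega
  have hkey : A = η * A * (-∑ i ∈ Z, α i) := by
    have h1 : (g + C (η * A) * X ^ k).coeff (k - 1) = (C (η * A) * N).coeff (k - 1) := by
      have : g + C (η * A) * X ^ k = C (η * A) * N := by
        have := sub_eq_zero.mp (hq ▸ hq0)
        exact this
      rw [this]
    rw [hfk1, coeff_C_mul, hNk1] at h1
    exact h1
  refine ⟨Z, hZcard, ?_⟩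
  have h2 : A * (1 + η * ∑ i ∈ Z, α i) = 0 := by linear_combination hkey
  have h3 := (mul_eq_zero.mp h2).resolve_left hAne
  linear_combination h3

end Main3

/-- `C_{k,1,k-1}(α,1,η)` is near MDS — its minimum Hamming distance is `n - k` and
the minimum Hamming distance of its dual is `k` — iff `η ∑_{i∈I} α_i = -1` for
some `k`-subset `I`. -/
theorem tgrs_nmds_iff {F : Type*} [Field F] [DecidableEq F] {n k : ℕ}
    (hk : 1 ≤ k) (hkn : k < n)
    (α : Fin n → F) (hα : Function.Injective α) (η : F) (hη : η ≠ 0) :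
    (IsLeast {w : ℕ | ∃ v ∈ tgrsCode k (k - 1) (Nat.sub_lt hk Nat.one_pos) α η,
          v ≠ 0 ∧ hammingNorm v = w} (n - k)
      ∧ IsLeast {w : ℕ |
          ∃ v ∈ dualCode (tgrsCode k (k - 1) (Nat.sub_lt hk Nat.one_pos) α η),
          v ≠ 0 ∧ hammingNorm v = w} k)
      ↔ ∃ I : Finset (Fin n), I.card = k ∧ η * ∑ i ∈ I, α i = -1 := by
  constructor
  · rintro ⟨⟨⟨v, hv, hv0, hnorm⟩, -⟩, -⟩
    exact forward_dir hk hkn α hα η hη hv hv0 hnorm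
  · rintro ⟨I, hI, hsum⟩
    refine ⟨⟨?_, ?_⟩, ?_, ?_⟩
    · obtain ⟨v, hv, hv0, hnorm⟩ := primal_exists hk hkn α hα η hη I hI hsum
      exact ⟨v, hv, hv0, hnorm⟩
    · rintro w ⟨v, hv, hv0, rfl⟩
      exact primal_lb hk hkn α hα η hv hv0
    · obtain ⟨v, hv, hv0, hnorm⟩ := dual_exists hk hkn α hα η hη I hI hsum
      exact ⟨v, hv, hv0, hnorm⟩
    · rintro w ⟨v, hv, hv0, rfl⟩
      exact dual_lb hk hkn α hα η hv hv0
end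

section
/- The minimum Hamming distance d of the twisted generalized Reed–Solomon code C_{k,1,ℓ}(α,𝟏,η) satisfies n-k ≤ d ≤ n-k+1; that is, the code is either MDS or almost MDS. -/
open Polynomial

section Aux

variable {F : Type*} [Field F] {k ℓ : ℕ} (hℓ : ℓ < k) (η : F)

/-- The twisted polynomial attached to coefficient vector `a`. -/
noncomputable def tpoly (a : Fin k → F) : Polynomial F :=
  (∑ i : Fin k, Polynomial.C (a i) * Polynomial.X ^ (i : ℕ))
    + Polynomial.C (η * a ⟨ℓ, hℓ⟩) * Polynomial.X ^ k

lemma tpoly_natDegree_le (a : Fin k → F) : (tpoly hℓ η a).natDegree ≤ k := by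
  refine le_trans (natDegree_add_le _ _) (max_le ?_ ?_)
  · refine natDegree_sum_le_of_forall_le _ _ fun i _ => ?_
    exact le_trans (natDegree_C_mul_le _ _) (by simp [le_of_lt i.isLt])
  · exact le_trans (natDegree_C_mul_le _ _) (by simp)

lemma tpoly_coeff_lt (a : Fin k → F) {m : ℕ} (hm : m < k) :
    (tpoly hℓ η a).coeff m = a ⟨m, hm⟩ := by
  rw [tpoly, coeff_add, finset_sum_coeff]
  rw [Finset.sum_eq_single (⟨m, hm⟩ : Fin k)]
  · simp [coeff_C_mul, coeff_X_pow, hm.ne, mul_assoc]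
  · intro i _ hi
    have : m ≠ (i : ℕ) := fun h => hi (by ext; simp [h.symm])
    simp [coeff_C_mul, coeff_X_pow, this]
  · simp

lemma tpoly_eq_zero (a : Fin k → F) (h : tpoly hℓ η a = 0) : a = 0 := by
  funext i
  have := tpoly_coeff_lt hℓ η a i.isLt
  rw [h] at this
  simpa using this.symm

lemma tpoly_eval_add (a b : Fin k → F) (β : F) :
    (tpoly hℓ η (a + b)).eval β = (tpoly hℓ η a).eval β + (tpoly hℓ η b).eval β := by
  simp only [tpoly, eval_add, eval_mul, eval_pow, eval_C, eval_X, eval_finset_sum,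
    Pi.add_apply]
  have h1 : ∑ x : Fin k, (a x + b x) * β ^ (x : ℕ)
      = (∑ x : Fin k, a x * β ^ (x : ℕ)) + ∑ x : Fin k, b x * β ^ (x : ℕ) := by
    rw [← Finset.sum_add_distrib]
    exact Finset.sum_congr rfl fun i _ => add_mul _ _ _
  rw [h1]; ring

lemma tpoly_eval_smul (c : F) (a : Fin k → F) (β : F) :
    (tpoly hℓ η (c • a)).eval β = c * (tpoly hℓ η a).eval β := by
  simp only [tpoly, eval_add, eval_mul, eval_pow, eval_C, eval_X, eval_finset_sum,
    Pi.smul_apply, smul_eq_mul]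
  have h1 : ∑ x : Fin k, (c * a x) * β ^ (x : ℕ)
      = c * ∑ x : Fin k, a x * β ^ (x : ℕ) := by
    rw [Finset.mul_sum]
    exact Finset.sum_congr rfl fun i _ => by ring
  rw [mul_add, h1]; ring

end Aux

/-- Lower bound: a twisted polynomial with nonzero coefficient vector
vanishes at most at `k` of the evaluation points. -/
lemma tgrs_zeros_le {F : Type*} [Field F] [DecidableEq F] {n k ℓ : ℕ}
    (hℓ : ℓ < k) (α : Fin n → F) (hα : Function.Injective α) (η : F)
    (a : Fin k → F) (ha : a ≠ 0) :
    (Finset.univ.filter fun j => (tpoly hℓ η a).eval (α j) = 0).card ≤ k := by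
  set f := tpoly hℓ η a with hf
  have hf0 : f ≠ 0 := fun h => ha (tpoly_eq_zero hℓ η a h)
  calc (Finset.univ.filter fun j => f.eval (α j) = 0).card
      ≤ f.roots.toFinset.card := by
        apply Finset.card_le_card_of_injOn α
        · intro j hj
          simp only [Finset.mem_coe, Finset.mem_filter] at hj
          rw [Finset.mem_coe, Multiset.mem_toFinset, mem_roots hf0]
          exact hj.2
        · exact fun x _ y _ h => hα h
    _ ≤ f.roots.card := f.roots.toFinset_card_le
    _ ≤ f.natDegree := f.card_roots'
    _ ≤ k := tpoly_natDegree_le hℓ η a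

/-- The minimum Hamming distance `d` of `C_{k,1,ℓ}(α,1,η)` satisfies
`n - k ≤ d ≤ n - k + 1`: the code is MDS or almost MDS. -/
theorem tgrs_min_distance_bounds {F : Type*} [Field F] [DecidableEq F] {n k ℓ : ℕ}
    (hℓ : ℓ < k) (hkn : k < n)
    (α : Fin n → F) (hα : Function.Injective α) (η : F) (hη : η ≠ 0) :
    ∃ d : ℕ,
      IsLeast {w : ℕ | ∃ v ∈ tgrsCode k ℓ hℓ α η, v ≠ 0 ∧ hammingNorm v = w} d
        ∧ n - k ≤ d ∧ d ≤ n - k + 1 := by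
  have hk1 : 1 ≤ k := by omega
  have hkn' : k - 1 ≤ n := by omega
  -- the evaluation linear map at the first k-1 points
  let φ : (Fin k → F) →ₗ[F] (Fin (k - 1) → F) :=
    { toFun := fun a j => (tpoly hℓ η a).eval (α (Fin.castLE hkn' j))
      map_add' := fun a b => by
        funext j; exact tpoly_eval_add hℓ η a b _
      map_smul' := fun c a => by
        funext j; exact tpoly_eval_smul hℓ η c a _ }
  -- φ is not injective by dimension count
  have hφ : ¬ Function.Injective φ := by
    intro hinj
    have h1 := LinearMap.finrank_le_finrank_of_injective hinj
    simp [Module.finrank_pi] at h1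
    omega
  rw [← LinearMap.ker_eq_bot] at hφ
  obtain ⟨a, haker, ha0⟩ := (Submodule.ne_bot_iff _).mp hφ
  -- the codeword built from a
  set f := tpoly hℓ η a with hf
  set v₀ : Fin n → F := fun j => f.eval (α j) with hv₀
  have hv₀mem : v₀ ∈ tgrsCode k ℓ hℓ α η := ⟨f, ⟨a, rfl⟩, fun j => rfl⟩
  have ha0' : ∀ b : Fin k → F, (fun j => (tpoly hℓ η b).eval (α j)) ≠ (0 : Fin n → F) →
      b ≠ 0 := by
    intro b hb h0
    apply hb
    funext j
    simp [h0, tpoly, Finset.sum_const_zero]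
  have hv₀ne : v₀ ≠ 0 := by
    intro h
    have hle := tgrs_zeros_le hℓ α hα η a ha0
    have : (Finset.univ.filter fun j => f.eval (α j) = 0) = Finset.univ := by
      apply Finset.filter_true_of_mem
      intro j _
      have := congrFun h j
      simpa [hv₀] using this
    rw [this] at hle
    simp at hle
    omega
  -- v₀ vanishes at the first k-1 points
  have hvanish : ∀ j : Fin (k - 1), v₀ (Fin.castLE hkn' j) = 0 := by
    intro j
    have : φ a = 0 := haker
    exact congrFun this j
  -- weight of v₀ is at most n - (k-1)
  have hwt : hammingNorm v₀ ≤ n - k + 1 := by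
    have hsub : (Finset.univ.filter fun j => v₀ j ≠ 0)
        ⊆ (Finset.univ.image (Fin.castLE hkn'))ᶜ := by
      intro j hj
      simp only [Finset.mem_filter] at hj
      simp only [Finset.mem_compl, Finset.mem_image, not_exists]
      rintro i ⟨-, rfl⟩
      exact hj.2 (hvanish i)
    have himg : (Finset.univ.image (Fin.castLE hkn')).card = k - 1 := by
      rw [Finset.card_image_of_injective _ (Fin.castLE_injective hkn')]
      simp
    have h2 : (Finset.univ.filter fun j => v₀ j ≠ 0).card
        ≤ ((Finset.univ.image (Fin.castLE hkn'))ᶜ).card := Finset.card_le_card hsub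
    rw [Finset.card_compl, himg] at h2
    simp only [hammingNorm]
    simp only [Fintype.card_fin] at h2
    omega
  -- the set of weights
  set S := {w : ℕ | ∃ v ∈ tgrsCode k ℓ hℓ α η, v ≠ 0 ∧ hammingNorm v = w} with hS
  have hSne : S.Nonempty := ⟨hammingNorm v₀, v₀, hv₀mem, hv₀ne, rfl⟩
  refine ⟨sInf S, ⟨Nat.sInf_mem hSne, fun w hw => Nat.sInf_le hw⟩, ?_, ?_⟩
  · -- lower bound
    obtain ⟨v, hv, hvne, hw⟩ := Nat.sInf_mem hSne
    obtain ⟨g, ⟨b, hb⟩, hval⟩ := hv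
    have hb' : g = tpoly hℓ η b := hb
    subst hb'
    have hbne : b ≠ 0 := by
      apply ha0'
      intro h0
      apply hvne
      funext j
      rw [hval j]
      exact congrFun h0 j
    have hle := tgrs_zeros_le hℓ α hα η b hbne
    have hfilter : (Finset.univ.filter fun j => (tpoly hℓ η b).eval (α j) = 0)
        = Finset.univ.filter fun j => v j = 0 := by
      apply Finset.filter_congr
      intro j _
      rw [hval j]
    rw [hfilter] at hle
    have hsplit : (Finset.univ.filter fun j => v j = 0).card
        + (Finset.univ.filter fun j => ¬ v j = 0).card = n := by
      rw [Finset.card_filter_add_card_filter_not]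
      simp
    have hnorm : hammingNorm v = (Finset.univ.filter fun j => ¬ v j = 0).card := by
      simp only [hammingNorm, ne_eq]
    rw [← hw, hnorm]
    omega
  · exact le_trans (Nat.sInf_le ⟨v₀, hv₀mem, hv₀ne, rfl⟩) hwt
end
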